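/- Let ρ₊ ⊥ ρ₋ be density matrices and Δ := ε(ρ₊ − ρ₋) with ε ∈ (0,1). Then over all density matrices ω with λ^↓(Δ) + λ^↑(ω) ≥ 0 entrywise, the maximum of H(λ^↓(Δ) + λ^↑(ω)) − H(λ(ω)) is attained at ω = ρ₋ and equals S(ρ₋ + Δ) − S(ρ₋). -/

import Mathlib

open Matrix BigOperators
open scoped ComplexOrder

noncomputable section

/-- `η(x) = -x log x` (with `log 0 = 0` convention). -/
def eta (x : ℝ) : ℝ := -(x * Real.log x)

/-- Shannon entropy of a (non-negative) vector. -/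
def shannonH {n : ℕ} (p : Fin n → ℝ) : ℝ := ∑ i, eta (p i)

/-- Binary entropy `h(ε) = -ε log ε - (1-ε) log(1-ε)`. -/
def binEnt (x : ℝ) : ℝ := -(x * Real.log x) - ((1 - x) * Real.log (1 - x))

/-- Eigenvalues of a Hermitian matrix in non-decreasing order. -/
def eigUp {d : ℕ} (A : Matrix (Fin d) (Fin d) ℂ) (hA : A.IsHermitian) : Fin d → ℝ :=
  hA.eigenvalues ∘ Tuple.sort hA.eigenvalues

/-- Eigenvalues of a Hermitian matrix in non-increasing order. -/
def eigDown {d : ℕ} (A : Matrix (Fin d) (Fin d) ℂ) (hA : A.IsHermitian) : Fin d → ℝ :=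
  fun i => eigUp A hA i.rev

/-- Entries of a vector rearranged in non-increasing order. -/
def sortDown {n : ℕ} (x : Fin n → ℝ) : Fin n → ℝ :=
  fun i => (x ∘ Tuple.sort x) i.rev

/-- `Majorizes y x` : the vector `x` is majorized by the vector `y`. -/
def Majorizes {n : ℕ} (y x : Fin n → ℝ) : Prop :=
  (∀ k : ℕ, ∑ j ∈ Finset.univ.filter (fun j : Fin n => (j : ℕ) < k), sortDown x j ≤
            ∑ j ∈ Finset.univ.filter (fun j : Fin n => (j : ℕ) < k), sortDown y j) ∧
  ∑ j, x j = ∑ j, y j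

/-- Von Neumann entropy `S(A) = -Tr(A log A)` expressed via eigenvalues. -/
def vnEntropy {n : Type*} [Fintype n] [DecidableEq n] (A : Matrix n n ℂ) : ℝ :=
  if hA : A.IsHermitian then ∑ i, eta (hA.eigenvalues i) else 0

/-- Trace norm of a Hermitian matrix: sum of absolute values of eigenvalues. -/
def traceNorm {n : Type*} [Fintype n] [DecidableEq n] (A : Matrix n n ℂ) : ℝ :=
  if hA : A.IsHermitian then ∑ i, |hA.eigenvalues i| else 0

/-- A density matrix: positive semi-definite with unit trace. -/
def IsDensity {n : Type*} [Fintype n] [DecidableEq n] (ρ : Matrix n n ℂ) : Prop :=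
  ρ.PosSemidef ∧ ρ.trace = 1

/-- Matrix logarithm via the spectral decomposition (with `log 0 = 0` convention). -/
def mlog {n : Type*} [Fintype n] [DecidableEq n] (A : Matrix n n ℂ) : Matrix n n ℂ :=
  if hA : A.IsHermitian then
    (hA.eigenvectorUnitary : Matrix n n ℂ)
      * Matrix.diagonal (fun i => (Real.log (hA.eigenvalues i) : ℂ))
      * (star (hA.eigenvectorUnitary : Matrix n n ℂ))
  else 0

/-- Umegaki relative entropy `D(ρ‖σ) = Tr(ρ (log ρ - log σ))`. -/
def relEnt {n : Type*} [Fintype n] [DecidableEq n] (ρ σ : Matrix n n ℂ) : ℝ :=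
  ((ρ * (mlog ρ - mlog σ)).trace).re

/-- Max-relative entropy `D_max(ρ‖σ) = inf {λ > 0 : ρ ≤ e^λ σ}`. -/
def dMax {n : Type*} [Fintype n] [DecidableEq n] (ρ σ : Matrix n n ℂ) : ℝ :=
  sInf {l : ℝ | 0 < l ∧ (Real.exp l • σ - ρ).PosSemidef}

/-- Partial trace over the first tensor factor. -/
def ptraceA {dA dB : ℕ} (ρ : Matrix (Fin dA × Fin dB) (Fin dA × Fin dB) ℂ) :
    Matrix (Fin dB) (Fin dB) ℂ :=
  Matrix.of fun i j => ∑ a, ρ (a, i) (a, j)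

/-- Conditional entropy `S(A|B)_ρ = S(ρ_{AB}) - S(ρ_B)`. -/
def condEnt {dA dB : ℕ} (ρ : Matrix (Fin dA × Fin dB) (Fin dA × Fin dB) ℂ) : ℝ :=
  vnEntropy ρ - vnEntropy (ptraceA ρ)

/- ## auxiliary lemmas -/

lemma my_charpoly_conj {n R : Type*} [Fintype n] [DecidableEq n] [CommRing R]
    (V W A : Matrix n n R) (hVW : V * W = 1) :
    (V * A * W).charpoly = A.charpoly := by
  have hdet : V.det * W.det = 1 := by rw [← det_mul, hVW, det_one]
  set C' : Matrix n n R →+* Matrix n n (Polynomial R) := (Polynomial.C : R →+* Polynomial R).mapMatrix with hC'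
  have hVW' : C' V * C' W = 1 := by rw [← _root_.map_mul, hVW, _root_.map_one]
  have hcm : charmatrix (V * A * W) = C' V * charmatrix A * C' W := by
    unfold charmatrix
    rw [mul_sub, sub_mul]
    congr 1
    · have hcomm : Commute (Matrix.scalar n (Polynomial.X : Polynomial R)) (C' V) :=
        scalar_commute _ (fun r' => Commute.all _ _) _
      rw [← hcomm.eq, mul_assoc, hVW', mul_one]
    · rw [hC']
      simp only [RingHom.mapMatrix_apply]
      rw [← Matrix.map_mul, ← Matrix.map_mul]
  rw [Matrix.charpoly, Matrix.charpoly, hcm, det_mul, det_mul]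
  have : (C' V).det * (C' W).det = 1 := by rw [← det_mul, hVW', det_one]
  calc (C' V).det * (charmatrix A).det * (C' W).det
      = (charmatrix A).det * ((C' V).det * (C' W).det) := by ring
    _ = (charmatrix A).det := by rw [this, mul_one]

lemma my_charpoly_diagonal {n R : Type*} [Fintype n] [DecidableEq n] [CommRing R]
    (c : n → R) : (diagonal c).charpoly = ∏ i, (Polynomial.X - Polynomial.C (c i)) := by
  have hcm : charmatrix (diagonal c) =
      diagonal (fun i => (Polynomial.X : Polynomial R) - Polynomial.C (c i)) := by
    ext i j
    by_cases h : i = j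
    · subst h; simp
    · simp [charmatrix_apply_ne _ _ _ h, diagonal_apply_ne _ h]
  rw [Matrix.charpoly, hcm, det_diagonal]

/-- eigenvalue multiset of a hermitian matrix presented as a unitary conjugation
of a real diagonal matrix -/
lemma my_eig_multiset {d : ℕ} {A : Matrix (Fin d) (Fin d) ℂ} (hA : A.IsHermitian)
    {V : Matrix (Fin d) (Fin d) ℂ} (hV : V ∈ Matrix.unitaryGroup (Fin d) ℂ)
    (m : Fin d → ℝ)
    (hrep : A = V * diagonal (RCLike.ofReal ∘ m) * star V) :
    Finset.univ.val.map hA.eigenvalues = Finset.univ.val.map m := by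
  have hroots : ∀ (f : Fin d → ℝ),
      (diagonal (RCLike.ofReal ∘ f : Fin d → ℂ)).charpoly.roots
        = Finset.univ.val.map (RCLike.ofReal ∘ f : Fin d → ℂ) := by
    intro f
    rw [my_charpoly_diagonal]
    rw [Finset.prod_eq_multiset_prod]
    rw [show Finset.univ.val.map (fun i => Polynomial.X - Polynomial.C ((RCLike.ofReal ∘ f) i))
        = (Finset.univ.val.map (RCLike.ofReal ∘ f : Fin d → ℂ)).map
            (fun a => Polynomial.X - Polynomial.C a) by rw [Multiset.map_map]; rfl]
    exact Polynomial.roots_multiset_prod_X_sub_C _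
  have h1 : A.charpoly = (diagonal (RCLike.ofReal ∘ m : Fin d → ℂ)).charpoly := by
    rw [hrep]
    exact my_charpoly_conj _ _ _ (Matrix.mem_unitaryGroup_iff.mp hV)
  have h2 : A.charpoly = (diagonal (RCLike.ofReal ∘ hA.eigenvalues : Fin d → ℂ)).charpoly := by
    conv_lhs => rw [hA.spectral_theorem]
    exact my_charpoly_conj _ _ _
      (Matrix.mem_unitaryGroup_iff.mp (hA.eigenvectorUnitary).2)
  have h3 := (h2.symm.trans h1)
  have h4 := congrArg Polynomial.roots h3
  rw [hroots, hroots] at h4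
  have h5 : (Finset.univ.val.map hA.eigenvalues).map (RCLike.ofReal : ℝ → ℂ)
      = (Finset.univ.val.map m).map (RCLike.ofReal : ℝ → ℂ) := by
    rw [Multiset.map_map, Multiset.map_map]
    exact h4
  exact Multiset.map_injective (RCLike.ofReal_injective (K := ℂ)) h5

lemma my_map_comp_equiv {n : ℕ} {α : Type*} (f : Fin n → α) (e : Equiv.Perm (Fin n)) :
    Finset.univ.val.map (f ∘ e) = Finset.univ.val.map f := by
  have h1 : Finset.univ.val.map (⇑e) = Finset.univ.val := by
    have := Finset.map_univ_equiv e
    calc Finset.univ.val.map (⇑e) = (Finset.univ.map e.toEmbedding).val := by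
          rw [Finset.map_val]
          rfl
      _ = Finset.univ.val := by rw [this]
  calc Finset.univ.val.map (f ∘ e) = (Finset.univ.val.map (⇑e)).map f := by
        rw [Multiset.map_map]
    _ = Finset.univ.val.map f := by rw [h1]

lemma my_sorted_eq {n : ℕ} {x y : Fin n → ℝ} (hx : Monotone x) (hy : Monotone y)
    (h : Finset.univ.val.map x = Finset.univ.val.map y) : x = y := by
  rw [Fin.univ_val_map, Fin.univ_val_map] at h
  have hperm : List.Perm (List.ofFn x) (List.ofFn y) := Multiset.coe_eq_coe.mp h
  have := List.Perm.eq_of_sortedLE hx.sortedLE_ofFn hy.sortedLE_ofFn hperm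
  exact List.ofFn_injective this

lemma my_sum_of_multiset_eq {n : ℕ} {x y : Fin n → ℝ} (F : ℝ → ℝ)
    (h : Finset.univ.val.map x = Finset.univ.val.map y) :
    ∑ i, F (x i) = ∑ i, F (y i) := by
  have h2 : Finset.univ.val.map (F ∘ x) = Finset.univ.val.map (F ∘ y) := by
    rw [show Finset.univ.val.map (F ∘ x) = (Finset.univ.val.map x).map F by
      rw [Multiset.map_map], h, Multiset.map_map]
  rw [Finset.sum_eq_multiset_sum, Finset.sum_eq_multiset_sum]
  exact congrArg Multiset.sum h2

lemma my_psd_mulvec_zero {d : ℕ} {N : Matrix (Fin d) (Fin d) ℂ} (hN : N.PosSemidef)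
    {c : ℝ} (hc : c < 0) {w : Fin d → ℂ} (hw : N *ᵥ w = c • w) : w = 0 := by
  have h0 := hN.dotProduct_mulVec_nonneg w
  rw [hw, dotProduct_smul] at h0
  have hs := dotProduct_star_self_nonneg w
  set s := dotProduct (star w) w with hsdef
  have him : s.im = 0 := ((Complex.le_def).mp hs).2.symm
  have hre : 0 ≤ s.re := by simpa using ((Complex.le_def).mp hs).1
  have h0re : 0 ≤ (c • s).re := ((Complex.le_def).mp h0).1
  rw [Complex.smul_re, smul_eq_mul] at h0re
  have : s.re = 0 := by nlinarith
  have hs0 : s = 0 := Complex.ext this him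
  exact dotProduct_star_self_eq_zero.mp hs0

lemma my_herm_trace {d : ℕ} {A : Matrix (Fin d) (Fin d) ℂ} (hA : A.IsHermitian) :
    A.trace = ∑ i, (RCLike.ofReal (hA.eigenvalues i) : ℂ) := by
  conv_lhs => rw [hA.spectral_theorem, Unitary.conjStarAlgAut_apply]
  rw [trace_mul_comm, ← mul_assoc, Matrix.mem_unitaryGroup_iff'.mp (hA.eigenvectorUnitary).2,
    one_mul, trace_diagonal]
  rfl

lemma gibbs {x y : ℝ} (hx : 0 ≤ x) (hy : 0 < y) :
    x - y ≤ x * Real.log x - x * Real.log y := by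
  rcases eq_or_lt_of_le hx with h | h
  · simp [← h]; linarith
  · have h1 : Real.log (y / x) ≤ y / x - 1 := Real.log_le_sub_one_of_pos (by positivity)
    rw [Real.log_div (ne_of_gt hy) (ne_of_gt h)] at h1
    have := mul_le_mul_of_nonneg_left h1 hx
    have hx' : x ≠ 0 := ne_of_gt h
    field_simp at this
    nlinarith

lemma eta_subadd {a b : ℝ} (ha : 0 ≤ a) (hb : 0 ≤ b) : eta (a + b) ≤ eta a + eta b := by
  unfold eta
  rcases eq_or_lt_of_le ha with h | h
  · simp [← h]
  rcases eq_or_lt_of_le hb with h' | h'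
  · simp [← h']
  have hab : 0 < a + b := by linarith
  have l1 : Real.log a ≤ Real.log (a + b) := Real.log_le_log h (by linarith)
  have l2 : Real.log b ≤ Real.log (a + b) := Real.log_le_log h' (by linarith)
  have : (a + b) * Real.log (a + b) = a * Real.log (a+b) + b * Real.log (a+b) := by ring
  nlinarith

lemma pointwise_key {ε : ℝ} (hε0 : 0 < ε) (hε1 : ε < 1) (δ p q : ℝ) (hp : 0 ≤ p)
    (hdp : 0 ≤ δ + p) (hq : (0 ≤ δ ∧ q = 0) ∨ (δ < 0 ∧ q = -δ / ε)) :
    eta (δ + p) - eta p ≤ eta (δ + q) - eta q + (-Real.log (1 - ε)) * (p - q) := by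
  have hc : 0 ≤ -Real.log (1 - ε) := by
    have : Real.log (1 - ε) < 0 := Real.log_neg (by linarith) (by linarith)
    linarith
  rcases hq with ⟨hδ, rfl⟩ | ⟨hδ, rfl⟩
  · -- q = 0 case
    have h1 : eta (δ + p) ≤ eta δ + eta p := eta_subadd hδ hp
    have h2 : 0 ≤ -Real.log (1 - ε) * p := mul_nonneg hc hp
    simp only [add_zero, sub_zero]
    have : eta (0:ℝ) = 0 := by simp [eta]
    rw [this]
    linarith
  · -- q = -δ/ε =: μ
    set a : ℝ := -δ with ha_def
    have ha : 0 < a := by simp [ha_def]; linarith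
    set μ : ℝ := -δ / ε with hμ_def
    have hμ : 0 < μ := by positivity
    have haμ : a < μ := by
      rw [hμ_def, ← ha_def]
      rw [lt_div_iff₀ hε0]
      nlinarith
    have hpa : a ≤ p := by linarith [hdp]
    set b : ℝ := p - a with hb_def
    have hb : 0 ≤ b := by linarith
    have hp0 : 0 < p := lt_of_lt_of_le ha hpa
    have hμa : 0 < μ - a := by linarith
    have hμa_eq : μ - a = (1 - ε) * μ := by
      rw [hμ_def, ← ha_def]
      field_simp
    have hlog : Real.log (μ - a) = Real.log (1 - ε) + Real.log μ := by
      rw [hμa_eq, Real.log_mul (by linarith) (ne_of_gt hμ)]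
    have hδp : δ + p = b := by rw [hb_def, ha_def]; ring
    have hδμ : δ + μ = μ - a := by rw [ha_def]; ring
    rw [hδp, hδμ]
    unfold eta
    -- goal: -(b log b) - -(p log p) ≤ -((μ-a) log (μ-a)) - -(μ log μ) + c (p - μ)
    -- i.e. p log p - b log b ≤ p log μ - b log (μ-a)  after ring with c = log μ - log(μ-a)
    have hgibbs : b - (μ - a) * p / μ ≤ b * Real.log b - b * Real.log ((μ - a) * p / μ) :=
      gibbs hb (by positivity)
    have hlogy : Real.log ((μ - a) * p / μ) = Real.log (μ - a) + Real.log p - Real.log μ := by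
      rw [Real.log_div (by positivity) (ne_of_gt hμ), Real.log_mul (ne_of_gt hμa) (ne_of_gt hp0)]
    rw [hlogy, mul_sub, mul_add] at hgibbs
    have hi : Real.log p - Real.log μ ≤ p / μ - 1 := by
      have := Real.log_le_sub_one_of_pos (x := p / μ) (by positivity)
      rwa [Real.log_div (ne_of_gt hp0) (ne_of_gt hμ)] at this
    have hia := mul_le_mul_of_nonneg_left hi (le_of_lt ha)
    -- combine
    have hμne : μ ≠ 0 := ne_of_gt hμ
    have hkey : a * (Real.log p - Real.log μ) ≤ b - (μ - a) * p / μ → True := fun _ => trivial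
    -- final: nlinarith style
    have e1 : (μ - a) * p / μ = p - a * p / μ := by field_simp
    rw [e1] at hgibbs
    have e2 : a * (p / μ - 1) = a * p / μ - a := by ring
    rw [e2] at hia
    -- p log p = b log p + a log p
    have hsum : p * Real.log p = b * Real.log p + a * Real.log p := by rw [hb_def]; ring
    rw [mul_sub] at hia
    have hsum2 : p * Real.log μ = b * Real.log μ + a * Real.log μ := by rw [hb_def]; ring
    have hfin : p * Real.log p - b * Real.log b ≤ p * Real.log μ - b * Real.log (μ - a) := by
      clear_value a μ b
      linarith [hgibbs, hia, hsum, hsum2, hb_def]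
    have hcL : -Real.log (1 - ε) = Real.log μ - Real.log (μ - a) := by rw [hlog]; ring
    have hrhs : -((μ - a) * Real.log (μ - a)) - -(μ * Real.log μ) + -Real.log (1 - ε) * (p - μ)
        = p * Real.log μ - b * Real.log (μ - a) := by rw [hcL, hb_def]; ring
    rw [hrhs]
    linarith [hfin]

/-- over all density matrices `ω` with `λ^↓(Δ) + λ^↑(ω) ≥ 0` entrywise, the
maximum of `H(λ^↓(Δ) + λ^↑(ω)) - H(λ(ω))` is attained at `ω = ρ₋` and equals
`S(ρ₋ + Δ) - S(ρ₋)`. -/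
theorem max_attained_at_rho_minus {d : ℕ} (ρp ρm : Matrix (Fin d) (Fin d) ℂ)
    (hp : IsDensity ρp) (hm : IsDensity ρm) (horth : ρp * ρm = 0)
    (ε : ℝ) (hε : ε ∈ Set.Ioo (0 : ℝ) 1)
    (Δ : Matrix (Fin d) (Fin d) ℂ) (hΔdef : Δ = ε • (ρp - ρm)) (hΔ : Δ.IsHermitian) :
    (∀ ω : Matrix (Fin d) (Fin d) ℂ, ∀ hω : IsDensity ω,
      (∀ i, 0 ≤ eigDown Δ hΔ i + eigUp ω hω.1.isHermitian i) →
      shannonH (fun i => eigDown Δ hΔ i + eigUp ω hω.1.isHermitian i) - vnEntropy ω ≤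
        vnEntropy (ρm + Δ) - vnEntropy ρm) ∧
    shannonH (fun i => eigDown Δ hΔ i + eigUp ρm hm.1.isHermitian i) - vnEntropy ρm =
      vnEntropy (ρm + Δ) - vnEntropy ρm := by
  obtain ⟨hε0, hε1⟩ := hε
  have hεne : ε ≠ 0 := ne_of_gt hε0
  have hMP : ρm * ρp = 0 := by
    have h := congrArg conjTranspose horth
    rwa [conjTranspose_mul, hm.1.isHermitian.eq, hp.1.isHermitian.eq,
      conjTranspose_zero] at h
  set δf : Fin d → ℝ := hΔ.eigenvalues with hδf
  set g : ℝ → ℝ := fun x => if x < 0 then -x / ε else 0 with hg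
  set mv : Fin d → ℝ := fun j => g (δf j) with hmv
  have hganti : Antitone g := by
    intro x y hxy
    simp only [hg]
    by_cases hy : y < 0
    · have hx : x < 0 := lt_of_le_of_lt hxy hy
      rw [if_pos hx, if_pos hy, div_le_div_iff₀ hε0 hε0]
      nlinarith
    · rw [if_neg hy]
      by_cases hx : x < 0
      · rw [if_pos hx]
        exact le_of_lt (div_pos (by linarith) hε0)
      · rw [if_neg hx]
  have hPΔ : ρp * Δ = ε • (ρp * ρp) := by
    rw [hΔdef, Matrix.mul_smul, Matrix.mul_sub, horth, sub_zero]
  have hMΔ : ρm * Δ = (-ε) • (ρm * ρm) := by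
    rw [hΔdef, Matrix.mul_smul, Matrix.mul_sub, hMP, zero_sub, smul_neg, neg_smul]
  have heig : ∀ j, Δ *ᵥ ⇑(hΔ.eigenvectorBasis j) = δf j • ⇑(hΔ.eigenvectorBasis j) :=
    fun j => hΔ.mulVec_eigenvectorBasis j
  have hεne' : (-ε) ≠ 0 := by simpa using hεne
  have hMM : ρm * ρm = (-ε)⁻¹ • (ρm * Δ) := by
    rw [hMΔ, smul_smul, inv_mul_cancel₀ hεne', one_smul]
  have hact : ∀ j, ρm *ᵥ ⇑(hΔ.eigenvectorBasis j) = mv j • ⇑(hΔ.eigenvectorBasis j) := by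
    intro j
    set u : Fin d → ℂ := ⇑(hΔ.eigenvectorBasis j) with hu
    rcases lt_trichotomy (δf j) 0 with hj | hj | hj
    · have hPP : ρp * ρp = ε⁻¹ • (ρp * Δ) := by
        rw [hPΔ, smul_smul, inv_mul_cancel₀ hεne, one_smul]
      have hw : ρp *ᵥ (ρp *ᵥ u) = (δf j / ε) • (ρp *ᵥ u) := by
        rw [mulVec_mulVec, hPP, smul_mulVec, ← mulVec_mulVec, heig j, mulVec_smul,
          smul_smul]
        congr 1
        field_simp
      have hw0 : ρp *ᵥ u = 0 :=
        my_psd_mulvec_zero hp.1 (div_neg_of_neg_of_pos hj hε0) hw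
      have hρm : ρm = ρp - ε⁻¹ • Δ := by
        rw [hΔdef, smul_smul, inv_mul_cancel₀ hεne, one_smul, sub_sub_cancel]
      have hmvj : mv j = -δf j / ε := by simp only [hmv, hg, if_pos hj]
      rw [hρm, sub_mulVec, hw0, smul_mulVec, heig j, zero_sub, hmvj, smul_smul,
        ← neg_smul]
      congr 1
      field_simp
    · have hu0 : Δ *ᵥ u = 0 := by rw [heig j, hj, zero_smul]
      have hzero : (ρm * ρm) *ᵥ u = 0 := by
        rw [hMM, smul_mulVec, ← mulVec_mulVec, hu0, mulVec_zero, smul_zero]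
      have hdot : star (ρm *ᵥ u) ⬝ᵥ (ρm *ᵥ u) = 0 := by
        rw [star_mulVec, ← dotProduct_mulVec, mulVec_mulVec, hm.1.isHermitian.eq, hzero,
          dotProduct_zero]
      have hw0 : ρm *ᵥ u = 0 := dotProduct_star_self_eq_zero.mp hdot
      have hmvj : mv j = 0 := by simp [hmv, hg, hj]
      rw [hw0, hmvj, zero_smul]
    · have hw : ρm *ᵥ (ρm *ᵥ u) = (-δf j / ε) • (ρm *ᵥ u) := by
        rw [mulVec_mulVec, hMM, smul_mulVec, ← mulVec_mulVec, heig j, mulVec_smul,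
          smul_smul]
        congr 1
        field_simp
      have hw0 : ρm *ᵥ u = 0 :=
        my_psd_mulvec_zero hm.1 (div_neg_of_neg_of_pos (by linarith) hε0) hw
      have hmvj : mv j = 0 := by simp [hmv, hg, not_lt.mpr hj.le]
      rw [hw0, hmvj, zero_smul]
  -- matrix representations
  set U : Matrix (Fin d) (Fin d) ℂ := (hΔ.eigenvectorUnitary : Matrix (Fin d) (Fin d) ℂ)
    with hUdef
  have hU2 : U * star U = 1 := Matrix.mem_unitaryGroup_iff.mp (hΔ.eigenvectorUnitary).2
  have hMU : ρm * U = U * diagonal (RCLike.ofReal ∘ mv) := by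
    ext i j
    have h := congrFun (hact j) i
    rw [Matrix.mul_apply, Matrix.mul_diagonal]
    simpa [Matrix.mulVec, dotProduct, hUdef, Pi.smul_apply,
      RCLike.real_smul_eq_coe_mul, mul_comm] using h
  have hMdiag : ρm = U * diagonal (RCLike.ofReal ∘ mv) * star U := by
    calc ρm = ρm * (U * star U) := by rw [hU2, mul_one]
      _ = (ρm * U) * star U := by rw [mul_assoc]
      _ = U * diagonal (RCLike.ofReal ∘ mv) * star U := by rw [hMU]
  have hB : (ρm + Δ).IsHermitian := hm.1.isHermitian.add hΔ
  have hBdiag : ρm + Δ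
      = U * diagonal (RCLike.ofReal ∘ (fun j => mv j + δf j)) * star U := by
    have hdiageq : (diagonal (RCLike.ofReal ∘ (fun j => mv j + δf j)) : Matrix (Fin d) (Fin d) ℂ)
        = diagonal (RCLike.ofReal ∘ mv) + diagonal (RCLike.ofReal ∘ δf) := by
      have hfun : (RCLike.ofReal ∘ (fun j => mv j + δf j) : Fin d → ℂ)
          = fun i => (RCLike.ofReal ∘ mv) i + (RCLike.ofReal ∘ δf) i := by
        funext j
        simp
      rw [diagonal_add, hfun]
    have hsplit : U * diagonal (RCLike.ofReal ∘ (fun j => mv j + δf j)) * star U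
        = U * diagonal (RCLike.ofReal ∘ mv) * star U
          + U * diagonal (RCLike.ofReal ∘ δf) * star U := by
      rw [hdiageq, mul_add, add_mul]
    rw [hsplit, ← hMdiag]
    congr 1
    exact hΔ.spectral_theorem
  have hmul_m : Finset.univ.val.map hm.1.isHermitian.eigenvalues = Finset.univ.val.map mv :=
    my_eig_multiset hm.1.isHermitian (hΔ.eigenvectorUnitary).2 mv hMdiag
  have hmul_B : Finset.univ.val.map hB.eigenvalues
      = Finset.univ.val.map (fun j => mv j + δf j) :=
    my_eig_multiset hB (hΔ.eigenvectorUnitary).2 _ hBdiag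
  -- sorted identification
  set τ : Equiv.Perm (Fin d) := Fin.revPerm.trans (Tuple.sort δf) with hτ
  have hdown_eq : eigDown Δ hΔ = δf ∘ τ := rfl
  have hK4 : eigUp ρm hm.1.isHermitian = g ∘ eigDown Δ hΔ := by
    apply my_sorted_eq
    · exact Tuple.monotone_sort _
    · intro i j hij
      exact hganti (by
        have : j.rev ≤ i.rev := Fin.rev_le_rev.mpr hij
        exact Tuple.monotone_sort δf this)
    · calc Finset.univ.val.map (eigUp ρm hm.1.isHermitian)
          = Finset.univ.val.map hm.1.isHermitian.eigenvalues :=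
            my_map_comp_equiv _ (Tuple.sort _)
        _ = Finset.univ.val.map mv := hmul_m
        _ = Finset.univ.val.map (mv ∘ τ) := (my_map_comp_equiv mv τ).symm
        _ = Finset.univ.val.map (g ∘ eigDown Δ hΔ) := rfl
  -- entropy helpers
  have hvn : ∀ (A : Matrix (Fin d) (Fin d) ℂ) (hA : A.IsHermitian),
      vnEntropy A = ∑ i, eta (hA.eigenvalues i) := by
    intro A hA
    simp only [vnEntropy, dif_pos hA]
  have hsum_perm : ∀ (A : Matrix (Fin d) (Fin d) ℂ) (hA : A.IsHermitian) (F : ℝ → ℝ),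
      ∑ i, F (eigUp A hA i) = ∑ i, F (hA.eigenvalues i) :=
    fun A hA F => Equiv.sum_comp (Tuple.sort hA.eigenvalues) (fun i => F (hA.eigenvalues i))
  have hsum_id : ∀ (A : Matrix (Fin d) (Fin d) ℂ) (hA : A.IsHermitian),
      ∑ i, eigUp A hA i = ∑ i, hA.eigenvalues i :=
    fun A hA => Equiv.sum_comp (Tuple.sort hA.eigenvalues) hA.eigenvalues
  have htr : ∀ (A : Matrix (Fin d) (Fin d) ℂ) (hA : A.IsHermitian), A.trace = 1 →
      ∑ i, hA.eigenvalues i = 1 := by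
    intro A hA h1
    have h2 := my_herm_trace hA
    rw [h1] at h2
    have h3 : (RCLike.ofReal (∑ i, hA.eigenvalues i) : ℂ) = 1 := by
      rw [RCLike.ofReal_sum]
      exact h2.symm
    exact RCLike.ofReal_injective (K := ℂ) (by rw [h3]; simp)
  have hq_sum : ∑ i, eigUp ρm hm.1.isHermitian i = 1 := by
    rw [hsum_id ρm hm.1.isHermitian]
    exact htr ρm hm.1.isHermitian hm.2
  have hq_spec : ∀ i, (0 ≤ eigDown Δ hΔ i ∧ eigUp ρm hm.1.isHermitian i = 0) ∨
      (eigDown Δ hΔ i < 0 ∧ eigUp ρm hm.1.isHermitian i = -(eigDown Δ hΔ i) / ε) := by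
    intro i
    rw [hK4]
    by_cases hi : eigDown Δ hΔ i < 0
    · exact Or.inr ⟨hi, by simp only [Function.comp_apply, hg, if_pos hi]⟩
    · exact Or.inl ⟨not_lt.mp hi, by simp only [Function.comp_apply, hg, if_neg hi]⟩
  have hK7 : vnEntropy (ρm + Δ) = ∑ i, eta (eigDown Δ hΔ i + eigUp ρm hm.1.isHermitian i) := by
    rw [hvn _ hB]
    have e1 : ∑ i, eta (hB.eigenvalues i) = ∑ j, eta (mv j + δf j) :=
      my_sum_of_multiset_eq eta hmul_B
    have e2 : ∑ j, eta (mv j + δf j) = ∑ i, eta (mv (τ i) + δf (τ i)) :=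
      (Equiv.sum_comp τ (fun j => eta (mv j + δf j))).symm
    rw [e1, e2]
    apply Finset.sum_congr rfl
    intro i _
    have : eigUp ρm hm.1.isHermitian i = mv (τ i) := congrFun hK4 i
    rw [this]
    have : eigDown Δ hΔ i = δf (τ i) := rfl
    rw [this, add_comm]
  have hK6 : vnEntropy ρm = ∑ i, eta (eigUp ρm hm.1.isHermitian i) := by
    rw [hvn _ hm.1.isHermitian, hsum_perm ρm hm.1.isHermitian eta]
  constructor
  · intro ω hω hcon
    have hp_nonneg : ∀ i, 0 ≤ eigUp ω hω.1.isHermitian i :=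
      fun i => hω.1.eigenvalues_nonneg _
    have hp_sum : ∑ i, eigUp ω hω.1.isHermitian i = 1 := by
      rw [hsum_id ω hω.1.isHermitian]
      exact htr ω hω.1.isHermitian hω.2
    have hshannon : shannonH (fun i => eigDown Δ hΔ i + eigUp ω hω.1.isHermitian i)
        = ∑ i, eta (eigDown Δ hΔ i + eigUp ω hω.1.isHermitian i) := rfl
    have hvnω : vnEntropy ω = ∑ i, eta (eigUp ω hω.1.isHermitian i) := by
      rw [hvn _ hω.1.isHermitian, hsum_perm ω hω.1.isHermitian eta]
    rw [hshannon, hvnω, hK7, ← Finset.sum_sub_distrib]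
    calc ∑ i, (eta (eigDown Δ hΔ i + eigUp ω hω.1.isHermitian i)
            - eta (eigUp ω hω.1.isHermitian i))
        ≤ ∑ i, (eta (eigDown Δ hΔ i + eigUp ρm hm.1.isHermitian i)
            - eta (eigUp ρm hm.1.isHermitian i)
            + (-Real.log (1 - ε)) * (eigUp ω hω.1.isHermitian i
              - eigUp ρm hm.1.isHermitian i)) := by
          apply Finset.sum_le_sum
          intro i _
          exact pointwise_key hε0 hε1 (eigDown Δ hΔ i) (eigUp ω hω.1.isHermitian i)
            (eigUp ρm hm.1.isHermitian i) (hp_nonneg i) (hcon i) (hq_spec i)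
      _ = ∑ i, (eta (eigDown Δ hΔ i + eigUp ρm hm.1.isHermitian i)
            - eta (eigUp ρm hm.1.isHermitian i))
          + (-Real.log (1 - ε)) * ((∑ i, eigUp ω hω.1.isHermitian i)
            - ∑ i, eigUp ρm hm.1.isHermitian i) := by
          rw [Finset.sum_add_distrib, ← Finset.mul_sum]
          congr 2
          exact Finset.sum_sub_distrib _ _
      _ = ∑ i, (eta (eigDown Δ hΔ i + eigUp ρm hm.1.isHermitian i)
            - eta (eigUp ρm hm.1.isHermitian i)) := by
          rw [hp_sum, hq_sum, sub_self, mul_zero, add_zero]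
      _ = (∑ i, eta (eigDown Δ hΔ i + eigUp ρm hm.1.isHermitian i)) - vnEntropy ρm := by
          rw [Finset.sum_sub_distrib, hK6]
  · have hshannon : shannonH (fun i => eigDown Δ hΔ i + eigUp ρm hm.1.isHermitian i)
        = ∑ i, eta (eigDown Δ hΔ i + eigUp ρm hm.1.isHermitian i) := rfl
    rw [hshannon, ← hK7]
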